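/- arXiv:2210.07881 — 3 statements merged into one kernel-verified Lean document; each statement's English description precedes it below -/
import Mathlib

section
/- Let A, B, C, T, α be positive reals and define g(γ) = A/(γT) + Bγ + Cγ² for γ > 0. Then inf_{γ ∈ (0,α]} g(γ) ≤ 2·√(AB/T) + 2·C^{1/3}·(A/T)^{2/3} + A/(αT). -/
/-- For positive `A, B, C, T, α` and `g(γ) = A/(γT) + Bγ + Cγ²`,
`inf_{γ ∈ (0,α]} g(γ) ≤ 2√(AB/T) + 2 C^{1/3} (A/T)^{2/3} + A/(αT)`. -/
theorem inf_stepsize_bound (A B C T α : ℝ) (hA : 0 < A) (hB : 0 < B) (hC : 0 < C)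
    (hT : 0 < T) (hα : 0 < α) :
    sInf ((fun γ : ℝ => A/(γ*T) + B*γ + C*γ^2) '' Set.Ioc 0 α) ≤
      2 * Real.sqrt (A*B/T) + 2 * C^((1:ℝ)/3) * (A/T)^((2:ℝ)/3) + A/(α*T) := by
  set x : ℝ := C^((1:ℝ)/3) with hxdef
  set y : ℝ := (A/T)^((1:ℝ)/3) with hydef
  have hxpos : 0 < x := Real.rpow_pos_of_pos hC _
  have hypos : 0 < y := Real.rpow_pos_of_pos (by positivity) _
  have hx : x^3 = C := by
    rw [hxdef, ← Real.rpow_natCast (C^((1:ℝ)/3)) 3, ← Real.rpow_mul hC.le]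
    norm_num
  have hy : y^3 = A/T := by
    rw [hydef, ← Real.rpow_natCast ((A/T)^((1:ℝ)/3)) 3,
      ← Real.rpow_mul (by positivity : (0:ℝ) ≤ A/T)]
    norm_num
  have hy2 : y^2 = (A/T)^((2:ℝ)/3) := by
    rw [hydef, ← Real.rpow_natCast ((A/T)^((1:ℝ)/3)) 2,
      ← Real.rpow_mul (by positivity : (0:ℝ) ≤ A/T)]
    norm_num
  set a : ℝ := Real.sqrt (A/(B*T)) with hadef
  have hapos : 0 < a := Real.sqrt_pos.mpr (by positivity)
  set b : ℝ := y/x with hbdef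
  have hbpos : 0 < b := by positivity
  set s : ℝ := Real.sqrt (A*B/T) with hsdef
  have hspos : 0 < s := Real.sqrt_pos.mpr (by positivity)
  -- key algebraic identities
  have hBa : B * a = s := by
    rw [hsdef, show A*B/T = B^2*(A/(B*T)) by field_simp,
      Real.sqrt_mul (by positivity), Real.sqrt_sq hB.le]
  have has : a * s = A/T := by
    rw [hadef, hsdef, ← Real.sqrt_mul (by positivity),
      show A/(B*T)*(A*B/T) = (A/T)^2 by field_simp]
    exact Real.sqrt_sq (by positivity)
  have hAa : A/(a*T) = s := by
    rw [div_eq_iff (by positivity)]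
    have : a * s * T = A/T * T := by rw [has]
    rw [div_mul_cancel₀ _ hT.ne'] at this
    linarith
  have hAb : A/(b*T) = x*y^2 := by
    rw [hbdef, div_eq_iff (by positivity)]
    have hA' : A = y^3 * T := by
      field_simp at hy; linarith [hy]
    rw [hA']; field_simp
  have hCb : C * b^2 = x*y^2 := by
    rw [hbdef, ← hx]; field_simp
  set γ : ℝ := min α (min a b) with hγdef
  have hγpos : 0 < γ := lt_min hα (lt_min hapos hbpos)
  have hγα : γ ≤ α := min_le_left _ _
  have hγa : γ ≤ a := le_trans (min_le_right _ _) (min_le_left _ _)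
  have hγb : γ ≤ b := le_trans (min_le_right _ _) (min_le_right _ _)
  have hmem : A/(γ*T) + B*γ + C*γ^2 ∈
      ((fun γ : ℝ => A/(γ*T) + B*γ + C*γ^2) '' Set.Ioc 0 α) :=
    ⟨γ, ⟨hγpos, hγα⟩, rfl⟩
  have hbdd : BddBelow ((fun γ : ℝ => A/(γ*T) + B*γ + C*γ^2) '' Set.Ioc 0 α) := by
    refine ⟨0, ?_⟩
    rintro v ⟨u, ⟨hu0, _⟩, rfl⟩
    positivity
  refine le_trans (csInf_le hbdd hmem) ?_
  -- bound each term
  have h1 : B*γ ≤ s := by rw [← hBa]; nlinarith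
  have h2 : C*γ^2 ≤ x*y^2 := by
    rw [← hCb]
    have := pow_le_pow_left₀ hγpos.le hγb 2
    nlinarith
  have h3 : A/(γ*T) ≤ A/(α*T) + s + x*y^2 := by
    have e1 : (0:ℝ) ≤ A/(α*T) := by positivity
    have e2 : (0:ℝ) ≤ s := hspos.le
    have e3 : (0:ℝ) ≤ x*y^2 := by positivity
    rcases min_cases α (min a b) with ⟨h, _⟩ | ⟨h, _⟩
    · rw [hγdef, h]; linarith
    · rcases min_cases a b with ⟨h', _⟩ | ⟨h', _⟩
      · rw [hγdef, h, h', hAa]; linarith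
      · rw [hγdef, h, h', hAb]; linarith
  have hrw : 2 * C^((1:ℝ)/3) * (A/T)^((2:ℝ)/3) = 2 * (x*y^2) := by
    rw [← hy2, ← hxdef]; ring
  rw [hrw]
  linarith
end

section
/- Let W(t) = (1−η)I + ηA where η ∈ (0,1), A is a random doubly stochastic matrix with E[A] = W satisfying ‖ΠWy‖ ≤ ρ‖Πy‖ for all y, and ‖A‖₂ ≤ 1 almost surely. Then for all x ∈ ℝ^n, E[‖ΠW(t)x‖²] ≤ (1 − 2η(1−η)(1−ρ))·‖Πx‖². -/
open Matrix MeasureTheory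

/-- The centering projection `Π = I − (1/n) 𝟙𝟙ᵀ`. -/
noncomputable def centerProj (n : ℕ) : Matrix (Fin n) (Fin n) ℝ :=
  1 - (n : ℝ)⁻¹ • Matrix.of (fun _ _ => (1 : ℝ))

lemma centerProj_coord {n : ℕ} (M : Matrix (Fin n) (Fin n) ℝ) (y : EuclideanSpace ℝ (Fin n))
    (i : Fin n) :
    (Matrix.toEuclideanCLM (𝕜 := ℝ) M y) i = ∑ j, M i j * y j := by
  have h := congrFun (Matrix.ofLp_toEuclideanCLM (𝕜 := ℝ) M y) i
  simpa [Matrix.toLin'_apply, Matrix.mulVec, dotProduct] using h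

lemma centerProj_inner_eq {n : ℕ} (a b : EuclideanSpace ℝ (Fin n)) :
    (inner ℝ a b : ℝ) = ∑ i, a i * b i := by
  simp [PiLp.inner_apply, RCLike.inner_apply, mul_comm]

lemma centerProj_norm_sq_eq {n : ℕ} (y : EuclideanSpace ℝ (Fin n)) : ‖y‖^2 = ∑ i, (y i)^2 := by
  rw [← real_inner_self_eq_norm_sq, centerProj_inner_eq]
  simp [sq]

lemma centerProj_star (n : ℕ) : star (centerProj n) = centerProj n := by
  ext i j
  simp [centerProj, Matrix.star_apply, Matrix.one_apply, Matrix.sub_apply, eq_comm]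

lemma centerProj_idem (n : ℕ) : centerProj n * centerProj n = centerProj n := by
  rcases Nat.eq_zero_or_pos n with h | h
  · subst h; ext i; exact absurd i.2 (by omega)
  have hn : (n : ℝ) ≠ 0 := Nat.cast_ne_zero.mpr h.ne'
  ext i j
  simp only [centerProj, Matrix.sub_apply, Matrix.mul_apply, Matrix.smul_apply, Matrix.one_apply,
    Matrix.of_apply, smul_eq_mul, mul_one]
  have : ∀ x : Fin n, ((if i = x then (1:ℝ) else 0) - (↑n)⁻¹) * ((if x = j then 1 else 0) - (↑n)⁻¹)
      = (if i = x then (1:ℝ) else 0) * (if x = j then 1 else 0)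
        - (↑n)⁻¹ * (if x = j then 1 else 0) - (if i = x then (1:ℝ) else 0) * (↑n)⁻¹
        + (↑n)⁻¹ * (↑n)⁻¹ := by intro x; ring
  rw [Finset.sum_congr rfl (fun x _ => this x)]
  simp only [Finset.sum_add_distrib, Finset.sum_sub_distrib, Finset.sum_const, ite_mul, one_mul,
    zero_mul, mul_ite, mul_one, mul_zero, Finset.sum_ite_eq, Finset.sum_ite_eq',
    Finset.mem_univ, if_true, Finset.card_univ, Fintype.card_fin, nsmul_eq_mul]
  field_simp
  ring

lemma centerProj_comm (n : ℕ) (M : Matrix (Fin n) (Fin n) ℝ)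
    (hM : M ∈ doublyStochastic ℝ (Fin n)) : centerProj n * M = M * centerProj n := by
  have h1 : (Matrix.of (fun _ _ => (1:ℝ)) : Matrix (Fin n) (Fin n) ℝ) * M
      = Matrix.of (fun _ _ => (1:ℝ)) := by
    ext i j
    simp [Matrix.mul_apply, sum_col_of_mem_doublyStochastic hM j]
  have h2 : M * (Matrix.of (fun _ _ => (1:ℝ)) : Matrix (Fin n) (Fin n) ℝ)
      = Matrix.of (fun _ _ => (1:ℝ)) := by
    ext i j
    simp [Matrix.mul_apply, sum_row_of_mem_doublyStochastic hM i]
  simp only [centerProj, sub_mul, mul_sub, one_mul, mul_one, smul_mul_assoc, mul_smul_comm,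
    h1, h2]

lemma centerProj_norm_le (n : ℕ) (z : EuclideanSpace ℝ (Fin n)) :
    ‖Matrix.toEuclideanCLM (𝕜 := ℝ) (centerProj n) z‖ ≤ ‖z‖ := by
  set T := Matrix.toEuclideanCLM (𝕜 := ℝ) (centerProj n) with hT
  have hsq : ‖T z‖^2 = (inner ℝ (T z) (T z) : ℝ) := (real_inner_self_eq_norm_sq _).symm
  have hadj : (inner ℝ (T z) (T z) : ℝ) = (inner ℝ (T z) z : ℝ) := by
    have h1 : (inner ℝ (T z) (T z) : ℝ) = (inner ℝ z ((ContinuousLinearMap.adjoint T) (T z)) : ℝ) :=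
      (ContinuousLinearMap.adjoint_inner_right T _ _).symm
    rw [h1, ← ContinuousLinearMap.star_eq_adjoint, hT, ← map_star, centerProj_star,
      ← ContinuousLinearMap.mul_apply, ← _root_.map_mul, centerProj_idem]
    exact real_inner_comm _ _
  have hcs : (inner ℝ (T z) z : ℝ) ≤ ‖T z‖ * ‖z‖ := real_inner_le_norm _ _
  nlinarith [norm_nonneg (T z), norm_nonneg z]

set_option maxHeartbeats 1000000 in
/-- OD-EquiDyn consensus: if `W(t) = (1−η)I + ηA` where `A` is a random doubly
stochastic matrix with `E[A] = W`, `W` has consensus rate `ρ`, and `‖A‖₂ ≤ 1`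
a.s., then `E[‖ΠW(t)x‖²] ≤ (1 − 2η(1−η)(1−ρ)) ‖Πx‖²`. -/
theorem od_equidyn_consensus (n : ℕ) {Ω : Type*} [MeasureSpace Ω]
    [IsProbabilityMeasure (volume : Measure Ω)]
    (A : Ω → Matrix (Fin n) (Fin n) ℝ)
    (hA : ∀ ω, A ω ∈ doublyStochastic ℝ (Fin n))
    (W : Matrix (Fin n) (Fin n) ℝ)
    (hmean : ∀ i j : Fin n, ∫ ω, A ω i j = W i j)
    (hint : ∀ i j : Fin n, Integrable (fun ω => A ω i j))
    (ρ : ℝ) (hρ0 : 0 ≤ ρ) (hρ1 : ρ < 1)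
    (hcons : ∀ y : EuclideanSpace ℝ (Fin n),
      ‖Matrix.toEuclideanCLM (𝕜 := ℝ) (centerProj n * W) y‖ ≤
        ρ * ‖Matrix.toEuclideanCLM (𝕜 := ℝ) (centerProj n) y‖)
    (hAnorm : ∀ᵐ ω, ‖Matrix.toEuclideanCLM (𝕜 := ℝ) (A ω)‖ ≤ 1)
    (η : ℝ) (hη0 : 0 < η) (hη1 : η < 1)
    (x : EuclideanSpace ℝ (Fin n)) :
    (∫ ω, ‖Matrix.toEuclideanCLM (𝕜 := ℝ)
        (centerProj n * ((1-η) • (1 : Matrix (Fin n) (Fin n) ℝ) + η • A ω)) x‖^2)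
      ≤ (1 - 2*η*(1-η)*(1-ρ)) *
        ‖Matrix.toEuclideanCLM (𝕜 := ℝ) (centerProj n) x‖^2 := by
  classical
  have hη0' : (0:ℝ) ≤ 1 - η := by linarith
  set p : EuclideanSpace ℝ (Fin n) := Matrix.toEuclideanCLM (𝕜 := ℝ) (centerProj n) x with hp
  set g : Ω → EuclideanSpace ℝ (Fin n) :=
    fun ω => Matrix.toEuclideanCLM (𝕜 := ℝ) (centerProj n * A ω) x with hg
  -- decomposition of the matrix
  have hdecomp : ∀ ω, Matrix.toEuclideanCLM (𝕜 := ℝ)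
      (centerProj n * ((1-η) • (1 : Matrix (Fin n) (Fin n) ℝ) + η • A ω)) x
      = (1-η) • p + η • g ω := by
    intro ω
    have hmat : centerProj n * ((1-η) • (1 : Matrix (Fin n) (Fin n) ℝ) + η • A ω)
        = (1-η) • centerProj n + η • (centerProj n * A ω) := by
      rw [mul_add, mul_smul_comm, mul_smul_comm, mul_one]
    rw [hmat, map_add, _root_.map_smul, _root_.map_smul]
    simp [hp, hg]
  -- expansion of the inner product against a fixed matrix
  have hexp : ∀ M : Matrix (Fin n) (Fin n) ℝ,
      (inner ℝ p (Matrix.toEuclideanCLM (𝕜 := ℝ) (centerProj n * M) x) : ℝ)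
      = ∑ i, ∑ j, ∑ k, (p i * centerProj n i k * x j) * M k j := by
    intro M
    rw [centerProj_inner_eq]
    refine Finset.sum_congr rfl fun i _ => ?_
    rw [centerProj_coord (centerProj n * M), Finset.mul_sum]
    refine Finset.sum_congr rfl fun j _ => ?_
    rw [Matrix.mul_apply, Finset.sum_mul, Finset.mul_sum]
    refine Finset.sum_congr rfl fun k _ => ?_
    ring
  set h : Ω → ℝ := fun ω => (inner ℝ p (g ω) : ℝ) with hh
  have hIntSum : ∀ i ∈ (Finset.univ : Finset (Fin n)), Integrable
      (fun ω => ∑ j, ∑ k, (p i * centerProj n i k * x j) * A ω k j) := fun i _ =>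
    integrable_finset_sum _ fun j _ => integrable_finset_sum _ fun k _ => (hint k j).const_mul _
  have hintg : Integrable h := by
    have heq : h = fun ω => ∑ i, ∑ j, ∑ k, (p i * centerProj n i k * x j) * A ω k j := by
      funext ω; exact hexp (A ω)
    rw [heq]
    exact integrable_finset_sum _ hIntSum
  have hinth : ∫ ω, h ω
      = (inner ℝ p (Matrix.toEuclideanCLM (𝕜 := ℝ) (centerProj n * W) x) : ℝ) := by
    calc ∫ ω, h ω = ∫ ω, ∑ i, ∑ j, ∑ k, (p i * centerProj n i k * x j) * A ω k j := by
          refine integral_congr_ae (Filter.Eventually.of_forall fun ω => ?_)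
          exact hexp (A ω)
      _ = ∑ i, ∑ j, ∑ k, (p i * centerProj n i k * x j) * W k j := by
          rw [integral_finset_sum _ hIntSum]
          refine Finset.sum_congr rfl fun i _ => ?_
          rw [integral_finset_sum _ (fun j _ =>
            integrable_finset_sum _ fun k _ => (hint k j).const_mul _)]
          refine Finset.sum_congr rfl fun j _ => ?_
          rw [integral_finset_sum _ (fun k _ => (hint k j).const_mul _)]
          refine Finset.sum_congr rfl fun k _ => ?_
          rw [integral_const_mul, hmean]
      _ = _ := (hexp W).symm
  have hEh : ∫ ω, h ω ≤ ρ * ‖p‖^2 := by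
    rw [hinth]
    calc (inner ℝ p (Matrix.toEuclideanCLM (𝕜 := ℝ) (centerProj n * W) x) : ℝ)
        ≤ ‖p‖ * ‖Matrix.toEuclideanCLM (𝕜 := ℝ) (centerProj n * W) x‖ := real_inner_le_norm _ _
      _ ≤ ‖p‖ * (ρ * ‖p‖) := by
          refine mul_le_mul_of_nonneg_left ?_ (norm_nonneg _)
          simpa [hp] using hcons x
      _ = ρ * ‖p‖^2 := by ring
  -- a.e. bound on ‖g ω‖
  have hgle : ∀ᵐ ω, ‖g ω‖ ≤ ‖p‖ := by
    filter_upwards [hAnorm] with ω hω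
    have hc : centerProj n * A ω = centerProj n * (A ω * centerProj n) := by
      rw [← centerProj_comm n (A ω) (hA ω), ← mul_assoc, centerProj_idem]
    have hge : g ω = Matrix.toEuclideanCLM (𝕜 := ℝ) (centerProj n)
        (Matrix.toEuclideanCLM (𝕜 := ℝ) (A ω) p) := by
      rw [hg]
      show Matrix.toEuclideanCLM (𝕜 := ℝ) (centerProj n * A ω) x = _
      rw [hc, _root_.map_mul, _root_.map_mul, ContinuousLinearMap.mul_apply,
        ContinuousLinearMap.mul_apply]
    rw [hge]
    calc ‖Matrix.toEuclideanCLM (𝕜 := ℝ) (centerProj n)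
          (Matrix.toEuclideanCLM (𝕜 := ℝ) (A ω) p)‖
        ≤ ‖Matrix.toEuclideanCLM (𝕜 := ℝ) (A ω) p‖ := centerProj_norm_le _ _
      _ ≤ ‖Matrix.toEuclideanCLM (𝕜 := ℝ) (A ω)‖ * ‖p‖ := ContinuousLinearMap.le_opNorm _ _
      _ ≤ 1 * ‖p‖ := mul_le_mul_of_nonneg_right hω (norm_nonneg p)
      _ = ‖p‖ := one_mul _
  -- pointwise expansion of the squared norm
  have hnorm_expand : ∀ ω, ‖(1-η) • p + η • g ω‖^2
      = (1-η)^2 * ‖p‖^2 + 2 * ((1-η) * (η * h ω)) + η^2 * ‖g ω‖^2 := by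
    intro ω
    rw [norm_add_sq_real, real_inner_smul_left, real_inner_smul_right, norm_smul, norm_smul,
      mul_pow, mul_pow, Real.norm_eq_abs, Real.norm_eq_abs, abs_of_nonneg hη0',
      abs_of_nonneg hη0.le]
  -- a.e. upper bound
  have hfa : ∀ᵐ ω, ‖(1-η) • p + η • g ω‖^2
      ≤ ((1-η)^2 + η^2) * ‖p‖^2 + (2*(1-η)*η) * h ω := by
    filter_upwards [hgle] with ω hω
    rw [hnorm_expand ω]
    have hgg : ‖g ω‖^2 ≤ ‖p‖^2 := pow_le_pow_left₀ (norm_nonneg _) hω 2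
    have h2 : η^2 * ‖g ω‖^2 ≤ η^2 * ‖p‖^2 := mul_le_mul_of_nonneg_left hgg (sq_nonneg η)
    nlinarith [h2]
  -- measurability of the integrand
  have hgi : ∀ i : Fin n, AEStronglyMeasurable (fun ω => g ω i) volume := by
    intro i
    have heq : (fun ω => g ω i) = fun ω => ∑ j, (∑ k, centerProj n i k * A ω k j) * x j := by
      funext ω
      rw [hg]
      show (Matrix.toEuclideanCLM (𝕜 := ℝ) (centerProj n * A ω) x) i = _
      rw [centerProj_coord]
      simp [Matrix.mul_apply]
    rw [heq]
    exact Finset.aestronglyMeasurable_fun_sum _ fun j _ =>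
      (Finset.aestronglyMeasurable_fun_sum _ fun k _ => (hint k j).1.const_mul _).mul_const _
  have hfm : AEStronglyMeasurable (fun ω => ‖(1-η) • p + η • g ω‖^2) volume := by
    have heq : (fun ω => ‖(1-η) • p + η • g ω‖^2)
        = fun ω => ∑ i, ((1-η) * p i + η * g ω i)^2 := by
      funext ω
      rw [centerProj_norm_sq_eq]
      refine Finset.sum_congr rfl fun i _ => ?_
      simp [PiLp.add_apply, PiLp.smul_apply, smul_eq_mul]
    rw [heq]
    exact Finset.aestronglyMeasurable_fun_sum _ fun i _ =>
      (aestronglyMeasurable_const.add ((hgi i).const_mul η)).pow 2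
  -- boundedness, hence integrability
  have hfb : ∀ᵐ ω, ‖(‖(1-η) • p + η • g ω‖^2)‖ ≤ ‖p‖^2 := by
    filter_upwards [hgle] with ω hω
    rw [Real.norm_eq_abs, abs_of_nonneg (pow_nonneg (norm_nonneg _) 2)]
    have h1 : ‖(1-η) • p + η • g ω‖ ≤ ‖p‖ := by
      calc ‖(1-η) • p + η • g ω‖ ≤ ‖(1-η) • p‖ + ‖η • g ω‖ := norm_add_le _ _
        _ = (1-η)*‖p‖ + η*‖g ω‖ := by
            rw [norm_smul, norm_smul, Real.norm_eq_abs, Real.norm_eq_abs,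
              abs_of_nonneg hη0', abs_of_nonneg hη0.le]
        _ ≤ (1-η)*‖p‖ + η*‖p‖ := by nlinarith
        _ = ‖p‖ := by ring
    exact pow_le_pow_left₀ (norm_nonneg _) h1 2
  have hfint : Integrable (fun ω => ‖(1-η) • p + η • g ω‖^2) :=
    (integrable_const (‖p‖^2)).mono' hfm hfb
  have hbint : Integrable (fun ω => ((1-η)^2 + η^2) * ‖p‖^2 + (2*(1-η)*η) * h ω) :=
    (integrable_const _).add (hintg.const_mul _)
  calc (∫ ω, ‖Matrix.toEuclideanCLM (𝕜 := ℝ)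
        (centerProj n * ((1-η) • (1 : Matrix (Fin n) (Fin n) ℝ) + η • A ω)) x‖^2)
      = ∫ ω, ‖(1-η) • p + η • g ω‖^2 := by
        refine integral_congr_ae (Filter.Eventually.of_forall fun ω => ?_)
        exact congrArg (fun z => ‖z‖^2) (hdecomp ω)
    _ ≤ ∫ ω, (((1-η)^2 + η^2) * ‖p‖^2 + (2*(1-η)*η) * h ω) :=
        integral_mono_ae hfint hbint hfa
    _ = ((1-η)^2 + η^2) * ‖p‖^2 + (2*(1-η)*η) * ∫ ω, h ω := by
        rw [integral_add (integrable_const _) (hintg.const_mul _), integral_const]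
        simp only [probReal_univ, one_smul]
        congr 1
        simp_rw [mul_assoc]
        rw [integral_const_mul, integral_const_mul, integral_const_mul]
    _ ≤ ((1-η)^2 + η^2) * ‖p‖^2 + (2*(1-η)*η) * (ρ * ‖p‖^2) := by
        have hc2 : (0:ℝ) ≤ 2*(1-η)*η := by nlinarith
        exact add_le_add_right (mul_le_mul_of_nonneg_left hEh hc2) _
    _ = (1 - 2*η*(1-η)*(1-ρ)) * ‖p‖^2 := by ring
end

section
/- Fix n ≥ 2 and v with 1 ≤ v ≤ n/2. Consider the maximal matching on the cycle vertex set {1,…,n} built greedily as follows with starting point s = 1: scanning j = 1, 2, …, n in order, connect j with (j+v mod n) whenever both are currently unmatched. Then the number of matched vertices is at least 2n/3. -/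
def greedyMatched (n v : ℕ) : Finset ℕ :=
  (List.range n).foldl (fun b j =>
    let i := (j + v) % n
    if i ≠ j ∧ i ∉ b ∧ j ∉ b then insert i (insert j b) else b) ∅

namespace GreedyAux

def step (n v : ℕ) (b : Finset ℕ) (j : ℕ) : Finset ℕ :=
  let i := (j + v) % n
  if i ≠ j ∧ i ∉ b ∧ j ∉ b then insert i (insert j b) else b

lemma greedy_eq (n v : ℕ) : greedyMatched n v = (List.range n).foldl (step n v) ∅ := rfl

lemma subset_step (n v : ℕ) (b : Finset ℕ) (j : ℕ) : b ⊆ step n v b j := by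
  unfold step
  dsimp only
  split
  · exact (Finset.subset_insert _ _).trans (Finset.subset_insert _ _)
  · exact subset_rfl

lemma mem_lt (n v : ℕ) (hn : 0 < n) (l : List ℕ) (b : Finset ℕ)
    (hl : ∀ j ∈ l, j < n) (hb : ∀ x ∈ b, x < n) :
    ∀ x ∈ l.foldl (step n v) b, x < n := by
  induction l generalizing b with
  | nil => exact hb
  | cons a l ih =>
    refine ih _ (fun j hj => hl j (List.mem_cons_of_mem _ hj)) ?_
    intro x hx
    unfold step at hx
    dsimp only at hx
    split at hx
    · rcases Finset.mem_insert.mp hx with h | h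
      · exact h ▸ Nat.mod_lt _ hn
      · rcases Finset.mem_insert.mp h with h | h
        · exact h ▸ hl a List.mem_cons_self
        · exact hb x h
    · exact hb x hx

/-- every element of the fold result belongs to a fully-inserted pair -/
def PairProp (n v : ℕ) (b : Finset ℕ) : Prop :=
  ∀ x ∈ b, ∃ j, j < n ∧ j ∈ b ∧ (j + v) % n ∈ b ∧ (x = j ∨ x = (j + v) % n)

lemma pairProp_foldl (n v : ℕ) (l : List ℕ) (b : Finset ℕ)
    (hl : ∀ j ∈ l, j < n) (hb : PairProp n v b) :
    PairProp n v (l.foldl (step n v) b) := by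
  induction l generalizing b with
  | nil => exact hb
  | cons a l ih =>
    refine ih _ (fun j hj => hl j (List.mem_cons_of_mem _ hj)) ?_
    intro x hx
    unfold step at hx ⊢
    dsimp only at hx ⊢
    by_cases hc : (a + v) % n ≠ a ∧ (a + v) % n ∉ b ∧ a ∉ b
    · rw [if_pos hc] at hx ⊢
      rcases Finset.mem_insert.mp hx with h | h
      · refine ⟨a, hl a List.mem_cons_self, ?_, ?_, Or.inr h⟩
        · exact Finset.mem_insert_of_mem (Finset.mem_insert_self _ _)
        · exact Finset.mem_insert_self _ _
      · rcases Finset.mem_insert.mp h with h | h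
        · refine ⟨a, hl a List.mem_cons_self, ?_, ?_, Or.inl h⟩
          · exact Finset.mem_insert_of_mem (Finset.mem_insert_self _ _)
          · exact Finset.mem_insert_self _ _
        · obtain ⟨j, hj, hj1, hj2, hj3⟩ := hb x h
          exact ⟨j, hj, Finset.mem_insert_of_mem (Finset.mem_insert_of_mem hj1),
            Finset.mem_insert_of_mem (Finset.mem_insert_of_mem hj2), hj3⟩
    · rw [if_neg hc] at hx ⊢
      exact hb x hx

lemma mod_ne (n v j : ℕ) (hv : ¬ n ∣ v) (hj : j < n) : (j + v) % n ≠ j := by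
  intro h
  apply hv
  have h2 : j ≡ j + v [MOD n] := by
    unfold Nat.ModEq
    rw [h, Nat.mod_eq_of_lt hj]
  have := (Nat.modEq_iff_dvd' (Nat.le_add_right j v)).mp h2
  simpa using this

/-- maximality: either j or (j+v)%n is matched -/
lemma coverA (n v : ℕ) (hv : ¬ n ∣ v) :
    ∀ k, k ≤ n → ∀ j < k, j ∈ (List.range k).foldl (step n v) ∅ ∨
      (j + v) % n ∈ (List.range k).foldl (step n v) ∅ := by
  intro k
  induction k with
  | zero => intro _ j hj; omega
  | succ k ih =>
    intro hk j hj
    rw [List.range_succ, List.foldl_append, List.foldl_cons, List.foldl_nil]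
    rcases Nat.lt_or_ge j k with h | h
    · rcases ih (by omega) j h with h' | h'
      · exact Or.inl (subset_step n v _ k h')
      · exact Or.inr (subset_step n v _ k h')
    · have hjk : j = k := by omega
      subst hjk
      set b := (List.range j).foldl (step n v) ∅ with hb
      have hne : (j + v) % n ≠ j := mod_ne n v j hv (by omega)
      unfold step
      dsimp only
      split
      · exact Or.inl (Finset.mem_insert_of_mem (Finset.mem_insert_self _ _))
      · rename_i hcond
        push_neg at hcond
        by_cases hm : (j + v) % n ∈ b
        · exact Or.inr hm
        · exact Or.inl (hcond hne hm)

end GreedyAux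

open GreedyAux in
/-- For `n ≥ 2` and `1 ≤ v ≤ n/2`, the greedy matching on the `v`-step cycle
matches at least `2n/3` vertices. -/
theorem greedyMatched_card_ge (n v : ℕ) (hn : 2 ≤ n) (hv1 : 1 ≤ v) (hv2 : 2*v ≤ n) :
    2 * n ≤ 3 * (greedyMatched n v).card := by
  have hn0 : 0 < n := by omega
  have hvn : v < n := by omega
  have hndv : ¬ n ∣ v := fun h => absurd (Nat.le_of_dvd (by omega) h) (by omega)
  set B := greedyMatched n v with hB
  -- B ⊆ range n
  have hBlt : ∀ x ∈ B, x < n := by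
    rw [hB, greedy_eq]
    exact mem_lt n v hn0 _ ∅ (fun j hj => List.mem_range.mp hj) (by simp)
  have hBsub : B ⊆ Finset.range n := fun x hx => Finset.mem_range.mpr (hBlt x hx)
  -- maximality
  have hA : ∀ j < n, j ∈ B ∨ (j + v) % n ∈ B := by
    intro j hj
    rw [hB, greedy_eq]
    exact coverA n v hndv n le_rfl j hj
  -- pair property
  have hP : PairProp n v B := by
    rw [hB, greedy_eq]
    exact pairProp_foldl n v _ ∅ (fun j hj => List.mem_range.mp hj) (by simp [PairProp])
  set U : Finset ℕ := Finset.range n \ B with hU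
  have hUmem : ∀ u ∈ U, u < n ∧ u ∉ B := by
    intro u hu
    rw [hU, Finset.mem_sdiff, Finset.mem_range] at hu
    exact hu
  -- fact1
  have fact1 : ∀ u ∈ U, (u + v) % n ∈ B := by
    intro u hu
    obtain ⟨hu1, hu2⟩ := hUmem u hu
    rcases hA u hu1 with h | h
    · exact absurd h hu2
    · exact h
  -- fact2
  have fact2 : ∀ u ∈ U, (u + 2 * v) % n ∈ B := by
    intro u hu
    obtain ⟨hu1, hu2⟩ := hUmem u hu
    have hw : (u + v) % n ∈ B := fact1 u hu
    obtain ⟨j, hj, hj1, hj2, hj3⟩ := hP _ hw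
    rcases hj3 with h | h
    · -- (u+v)%n = j, so (j+v)%n = (u+2v)%n
      have : (j + v) % n = (u + 2 * v) % n := by
        rw [← h, Nat.mod_add_mod]
        congr 1
        ring
      rwa [this] at hj2
    · -- (j+v)%n = (u+v)%n ⇒ j = u, contradiction
      exfalso
      have hmod : j % n = u % n := by
        have h1 : j + v ≡ u + v [MOD n] := h.symm
        exact Nat.ModEq.add_right_cancel' v h1
      have : j = u := by rwa [Nat.mod_eq_of_lt hj, Nat.mod_eq_of_lt hu1] at hmod
      subst this
      exact hu2 hj1
  -- injectivity counting
  have hinj : Set.InjOn (fun p : ℕ × ℕ => (p.1 + p.2 * v) % n) ↑(U ×ˢ Finset.range 3) := by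
    have key : ∀ u1 ∈ U, ∀ u2 ∈ U, ∀ k1 k2 : ℕ, k1 ≤ k2 → k2 < 3 →
        (u1 + k1 * v) % n = (u2 + k2 * v) % n → u1 = u2 ∧ k1 = k2 := by
      intro u1 hu1 u2 hu2 k1 k2 hle hk2 heq
      obtain ⟨hu1n, hu1B⟩ := hUmem u1 hu1
      obtain ⟨hu2n, hu2B⟩ := hUmem u2 hu2
      set d := k2 - k1 with hd
      have hcancel : u1 % n = (u2 + d * v) % n := by
        have h1 : u1 + k1 * v ≡ (u2 + d * v) + k1 * v [MOD n] := by
          have : u2 + k2 * v = (u2 + d * v) + k1 * v := by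
            have : k2 = d + k1 := by omega
            rw [this]; ring
          rw [Nat.ModEq, ← this]; exact heq
        exact Nat.ModEq.add_right_cancel' _ h1
      rw [Nat.mod_eq_of_lt hu1n] at hcancel
      have hdlt : d < 3 := by omega
      interval_cases d
      · -- d = 0
        simp at hcancel
        rw [Nat.mod_eq_of_lt hu2n] at hcancel
        exact ⟨hcancel, by omega⟩
      · -- d = 1
        exfalso
        rw [one_mul] at hcancel
        exact hu1B (hcancel ▸ fact1 u2 hu2)
      · -- d = 2
        exfalso
        exact hu1B (hcancel ▸ fact2 u2 hu2)
    intro p hp q hq heq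
    simp only [Finset.coe_product, Set.mem_prod, Finset.mem_coe, Finset.mem_product,
      Finset.mem_range] at hp hq
    obtain ⟨hp1, hp2⟩ := hp
    obtain ⟨hq1, hq2⟩ := hq
    rcases Nat.le_total p.2 q.2 with h | h
    · obtain ⟨h1, h2⟩ := key p.1 hp1 q.1 hq1 p.2 q.2 h hq2 heq
      exact Prod.ext h1 h2
    · obtain ⟨h1, h2⟩ := key q.1 hq1 p.1 hp1 q.2 p.2 h hp2 heq.symm
      exact Prod.ext h1.symm h2.symm
  have hmaps : ∀ p ∈ U ×ˢ Finset.range 3, (p.1 + p.2 * v) % n ∈ Finset.range n :=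
    fun p _ => Finset.mem_range.mpr (Nat.mod_lt _ hn0)
  have hcard : (U ×ˢ Finset.range 3).card ≤ (Finset.range n).card :=
    Finset.card_le_card_of_injOn _ hmaps hinj
  rw [Finset.card_product, Finset.card_range, Finset.card_range] at hcard
  have hsum : U.card + B.card = n := by
    rw [hU]
    rw [Finset.card_sdiff_add_card_eq_card hBsub, Finset.card_range]
  omega
end
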